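/- arXiv:0710.1037 — 3 statements merged into one kernel-verified Lean document; each statement's English description precedes it below -/
import Mathlib

section
/- Let n, k be positive integers with k ≤ n, let 𝔦 ⊂ {1,…,n} be an index set of cardinality k with complement 𝔦°, and let A : ℝ × ℂ^{n×k} → ℂ^{n×n} be continuous. Suppose Y : ℝ → ℂ^{n×k} is differentiable and satisfies Y'(x) = A(x, Y(x))·Y(x), and suppose Y admits a differentiable decomposition Y(x) = y(x)·u(x) where for each x the matrix u(x) ∈ ℂ^{k×k} is invertible and y(x) ∈ ℂ^{n×k} has its 𝔦-rows equal to the k×k identity matrix. Let ŷ(x) ∈ ℂ^{(n−k)×k} denote the 𝔦°-rows of y(x), and let a(x), b(x), c(x), d(x) denote respectively the 𝔦×𝔦, 𝔦×𝔦°, 𝔦°×𝔦 and 𝔦°×𝔦° submatrices of A(x, Y(x)). Then ŷ'(x) = c(x) + d(x)·ŷ(x) − ŷ(x)·(a(x) + b(x)·ŷ(x)) and u'(x) = (a(x) + b(x)·ŷ(x))·u(x) for all x. -/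
open Matrix

/-- Entrywise derivative of a matrix-valued function of a real variable. -/
def MHasDerivAt {m k : Type*} (f : ℝ → Matrix m k ℂ) (f' : Matrix m k ℂ) (x : ℝ) : Prop :=
  ∀ i j, HasDerivAt (fun t => f t i j) (f' i j) x

/-- The order embedding of `Fin k` into `Fin n` enumerating a finset of cardinality `k`. -/
noncomputable def emb {n k : ℕ} (s : Finset (Fin n)) (h : s.card = k) : Fin k → Fin n :=
  fun i => (s.orderIsoOfFin h i : Fin n)

lemma sum_emb {n k : ℕ} (s : Finset (Fin n)) (h : s.card = k) (f : Fin n → ℂ) :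
    ∑ i : Fin k, f (emb s h i) = ∑ q ∈ s, f q := by
  rw [← Finset.sum_coe_sort s f]
  exact Equiv.sum_comp (s.orderIsoOfFin h).toEquiv (fun x : s => f x)

lemma sum_emb_split {n k : ℕ} (𝔦 : Finset (Fin n)) (h𝔦 : 𝔦.card = k) (h𝔦c : 𝔦ᶜ.card = n - k)
    (f : Fin n → ℂ) :
    ∑ q, f q = (∑ i : Fin k, f (emb 𝔦 h𝔦 i)) + ∑ i : Fin (n-k), f (emb 𝔦ᶜ h𝔦c i) := by
  rw [sum_emb, sum_emb, Finset.sum_add_sum_compl 𝔦]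

lemma submatrix_mul_split {n k m : ℕ} (𝔦 : Finset (Fin n)) (h𝔦 : 𝔦.card = k)
    (h𝔦c : 𝔦ᶜ.card = n - k) (B : Matrix (Fin n) (Fin n) ℂ) (C : Matrix (Fin n) (Fin k) ℂ)
    (e : Fin m → Fin n) :
    (B * C).submatrix e id
      = B.submatrix e (emb 𝔦 h𝔦) * C.submatrix (emb 𝔦 h𝔦) id
        + B.submatrix e (emb 𝔦ᶜ h𝔦c) * C.submatrix (emb 𝔦ᶜ h𝔦c) id := by
  ext i j
  simp only [submatrix_apply, Matrix.add_apply, mul_apply, id_eq]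
  exact sum_emb_split 𝔦 h𝔦 h𝔦c _

lemma submatrix_mul_right {n k m : ℕ} (B : Matrix (Fin n) (Fin k) ℂ)
    (C : Matrix (Fin k) (Fin k) ℂ) (e : Fin m → Fin n) :
    (B * C).submatrix e id = B.submatrix e id * C := by
  ext i j
  simp [mul_apply]

/-- Theorem (coupled flow on the Grassmannian base and the fibres):
if `Y' = A(x,Y)·Y` and `Y = y·u` with `u` invertible and the `𝔦`-rows of `y` the identity,
then `ŷ' = c + d·ŷ − ŷ·(a + b·ŷ)` and `u' = (a + b·ŷ)·u`. -/
theorem coupled_grassmann_fibre_flow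
    (n k : ℕ) (hn : 0 < n) (hk : 0 < k) (hkn : k ≤ n)
    (𝔦 : Finset (Fin n)) (h𝔦 : 𝔦.card = k) (h𝔦c : 𝔦ᶜ.card = n - k)
    (A : ℝ → Matrix (Fin n) (Fin k) ℂ → Matrix (Fin n) (Fin n) ℂ)
    (hA : Continuous fun p : ℝ × Matrix (Fin n) (Fin k) ℂ => A p.1 p.2)
    (Y y : ℝ → Matrix (Fin n) (Fin k) ℂ)
    (u : ℝ → Matrix (Fin k) (Fin k) ℂ)
    (Dy : ℝ → Matrix (Fin n) (Fin k) ℂ)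
    (Du : ℝ → Matrix (Fin k) (Fin k) ℂ)
    (hY : ∀ x, MHasDerivAt Y (A x (Y x) * Y x) x)
    (hy : ∀ x, MHasDerivAt y (Dy x) x)
    (hu : ∀ x, MHasDerivAt u (Du x) x)
    (hdecomp : ∀ x, Y x = y x * u x)
    (huinv : ∀ x, IsUnit (u x))
    (hyid : ∀ x, (y x).submatrix (emb 𝔦 h𝔦) id = 1) :
    ∀ x : ℝ,
      (Dy x).submatrix (emb 𝔦ᶜ h𝔦c) id
          = (A x (Y x)).submatrix (emb 𝔦ᶜ h𝔦c) (emb 𝔦 h𝔦)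
            + (A x (Y x)).submatrix (emb 𝔦ᶜ h𝔦c) (emb 𝔦ᶜ h𝔦c)
              * (y x).submatrix (emb 𝔦ᶜ h𝔦c) id
            - (y x).submatrix (emb 𝔦ᶜ h𝔦c) id
              * ((A x (Y x)).submatrix (emb 𝔦 h𝔦) (emb 𝔦 h𝔦)
                 + (A x (Y x)).submatrix (emb 𝔦 h𝔦) (emb 𝔦ᶜ h𝔦c)
                   * (y x).submatrix (emb 𝔦ᶜ h𝔦c) id)
        ∧
      Du x
          = ((A x (Y x)).submatrix (emb 𝔦 h𝔦) (emb 𝔦 h𝔦)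
             + (A x (Y x)).submatrix (emb 𝔦 h𝔦) (emb 𝔦ᶜ h𝔦c)
               * (y x).submatrix (emb 𝔦ᶜ h𝔦c) id) * u x := by
  intro x
  -- product rule: derivative of Y = y*u is Dy*u + y*Du, uniqueness with A*Y
  have hprod : A x (Y x) * Y x = Dy x * u x + y x * Du x := by
    ext i j
    have h1 : HasDerivAt (fun t => Y t i j) ((Dy x * u x + y x * Du x) i j) x := by
      have : ∀ t, Y t i j = ∑ l, y t i l * u t l j := by
        intro t; rw [hdecomp t]; rfl
      simp only [Matrix.add_apply, mul_apply, ← Finset.sum_add_distrib]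
      refine HasDerivAt.congr_of_eventuallyEq
        (HasDerivAt.fun_sum (fun l _ => ((hy x i l).mul (hu x l j)))) ?_
      filter_upwards with t using this t
    exact (hY x i j).unique h1
  -- invertibility data
  have hud : IsUnit (u x).det := (Matrix.isUnit_iff_isUnit_det (u x)).mp (huinv x)
  have huu : u x * (u x)⁻¹ = 1 := Matrix.mul_nonsing_inv _ hud
  have huu' : (u x)⁻¹ * u x = 1 := Matrix.nonsing_inv_mul _ hud
  -- cancel u on the right: A*y = Dy + y*(Du*u⁻¹)
  have key : A x (Y x) * y x = Dy x + y x * (Du x * (u x)⁻¹) := by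
    have h2 : (A x (Y x) * (y x * u x)) * (u x)⁻¹ = (Dy x * u x + y x * Du x) * (u x)⁻¹ := by
      rw [← hdecomp x, hprod]
    calc A x (Y x) * y x = (A x (Y x) * (y x * u x)) * (u x)⁻¹ := by
          rw [← Matrix.mul_assoc, Matrix.mul_assoc _ (u x), huu, Matrix.mul_one]
      _ = (Dy x * u x + y x * Du x) * (u x)⁻¹ := h2
      _ = Dy x + y x * (Du x * (u x)⁻¹) := by
          rw [Matrix.add_mul, Matrix.mul_assoc, huu, Matrix.mul_one, Matrix.mul_assoc]
  -- Dy has zero 𝔦-rows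
  have hDy0 : (Dy x).submatrix (emb 𝔦 h𝔦) id = 0 := by
    ext i j
    have hconst : HasDerivAt (fun t => y t (emb 𝔦 h𝔦 i) j) 0 x := by
      have : ∀ t, y t (emb 𝔦 h𝔦 i) j = (1 : Matrix (Fin k) (Fin k) ℂ) i j := by
        intro t
        have := hyid t
        calc y t (emb 𝔦 h𝔦 i) j = (y t).submatrix (emb 𝔦 h𝔦) id i j := rfl
          _ = (1 : Matrix (Fin k) (Fin k) ℂ) i j := by rw [this]
      simpa [funext_iff] using
        (hasDerivAt_const x ((1 : Matrix (Fin k) (Fin k) ℂ) i j)).congr_of_eventuallyEq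
          (Filter.Eventually.of_forall this)
    exact (hy x (emb 𝔦 h𝔦 i) j).unique hconst
  set M := Du x * (u x)⁻¹ with hM
  -- 𝔦-rows of key
  have hi : (A x (Y x)).submatrix (emb 𝔦 h𝔦) (emb 𝔦 h𝔦)
        + (A x (Y x)).submatrix (emb 𝔦 h𝔦) (emb 𝔦ᶜ h𝔦c) * (y x).submatrix (emb 𝔦ᶜ h𝔦c) id
      = M := by
    have := congrArg (fun B => B.submatrix (emb 𝔦 h𝔦) (id : Fin k → Fin k)) key
    simp only [submatrix_add, Pi.add_apply] at this
    rw [submatrix_mul_split 𝔦 h𝔦 h𝔦c, submatrix_mul_right, hyid x, hDy0, Matrix.mul_one,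
      Matrix.one_mul, zero_add] at this
    exact this
  constructor
  · -- 𝔦°-rows of key
    have := congrArg (fun B => B.submatrix (emb 𝔦ᶜ h𝔦c) (id : Fin k → Fin k)) key
    simp only [submatrix_add, Pi.add_apply] at this
    rw [submatrix_mul_split 𝔦 h𝔦 h𝔦c, submatrix_mul_right, hyid x, Matrix.mul_one] at this
    rw [eq_sub_iff_add_eq, hi]
    exact this.symm
  · rw [hi, hM, Matrix.mul_assoc, huu', Matrix.mul_one]
end

section
/- Let n, k be positive integers with k ≤ n and let A : ℝ → ℂ^{n×n} be continuous. Suppose Q : ℝ → ℂ^{n×k} is continuously differentiable and satisfies the Drury–Oja flow Q'(x) = (I_n − Q(x)·Q(x)^†)·A(x)·Q(x), and suppose that at some x₀ ∈ ℝ the columns of Q(x₀) are orthonormal, i.e. Q(x₀)^†·Q(x₀) = I_k. Then Q(x)^†·Q(x) = I_k for all x ∈ ℝ; that is, the Drury–Oja flow preserves orthonormality of the frame. -/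
open Matrix

section helpers

attribute [local instance] Matrix.linftyOpNormedAddCommGroup Matrix.linftyOpNormedSpace

/-- Entrywise derivative implies derivative as a map into the normed space of matrices. -/
lemma MHasDerivAt.bundle {m k : Type*} [Fintype m] [Fintype k] [DecidableEq m] [DecidableEq k]
    {f : ℝ → Matrix m k ℂ} {f' : Matrix m k ℂ} {x : ℝ}
    (h : MHasDerivAt f f' x) : HasDerivAt f f' x := by
  have e : ∀ g : Matrix m k ℂ, ∑ i : m, ∑ j : k, g i j • Matrix.single i j (1 : ℂ) = g := by
    intro g
    conv_rhs => rw [matrix_eq_sum_single g]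
    refine Finset.sum_congr rfl fun i _ => Finset.sum_congr rfl fun j _ => ?_
    rw [smul_single, smul_eq_mul, mul_one]
  have h1 : HasDerivAt (fun t => ∑ i : m, ∑ j : k, f t i j • Matrix.single i j (1 : ℂ))
      (∑ i : m, ∑ j : k, f' i j • Matrix.single i j (1 : ℂ)) x :=
    HasDerivAt.fun_sum fun i _ => HasDerivAt.fun_sum fun j _ => (h i j).smul_const _
  simpa only [e] using h1

/-- Product rule for the Gram matrix `Qᴴ Q`. -/
lemma gram_hasDerivAt {n k : ℕ} {Q : ℝ → Matrix (Fin n) (Fin k) ℂ}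
    {Q' : Matrix (Fin n) (Fin k) ℂ} {x : ℝ} (h : MHasDerivAt Q Q' x) :
    HasDerivAt (fun t => (Q t)ᴴ * Q t) (Q'ᴴ * Q x + (Q x)ᴴ * Q') x := by
  apply MHasDerivAt.bundle
  intro i j
  have e : ∀ t, ((Q t)ᴴ * Q t) i j = ∑ l, star (Q t l i) * Q t l j := by
    intro t; simp [Matrix.mul_apply, Matrix.conjTranspose_apply]
  have hd : HasDerivAt (fun t => ∑ l, star (Q t l i) * Q t l j)
      (∑ l, (star (Q' l i) * Q x l j + star (Q x l i) * Q' l j)) x :=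
    HasDerivAt.fun_sum fun l _ => (h l i).star.mul (h l j)
  simp only [e]
  convert hd using 1
  simp [Matrix.add_apply, Matrix.mul_apply, Matrix.conjTranspose_apply, Finset.sum_add_distrib]

/-- The key algebraic identity for the Drury–Oja flow. -/
lemma oja_identity {n k : ℕ} (M : Matrix (Fin n) (Fin k) ℂ) (A' : Matrix (Fin n) (Fin n) ℂ) :
    ((1 - M * Mᴴ) * A' * M)ᴴ * M + Mᴴ * ((1 - M * Mᴴ) * A' * M)
      = -((Mᴴ * A'ᴴ * M) * (Mᴴ * M - 1)) - (Mᴴ * M - 1) * (Mᴴ * A' * M) := by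
  simp only [conjTranspose_mul, conjTranspose_sub, conjTranspose_one,
    conjTranspose_conjTranspose, Matrix.sub_mul, Matrix.mul_sub, Matrix.one_mul, Matrix.mul_one,
    Matrix.mul_assoc, neg_sub]
  abel

/-- The Drury–Oja flow `Q' = (I − Q·Q†)·A·Q` preserves orthonormality of the frame:
if `Q(x₀)†·Q(x₀) = I` at some point `x₀`, then `Q(x)†·Q(x) = I` for all `x`. -/
theorem drury_oja_preserves_orthonormality
    (n k : ℕ) (hn : 0 < n) (hk : 0 < k) (hkn : k ≤ n)
    (A : ℝ → Matrix (Fin n) (Fin n) ℂ) (hA : Continuous A)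
    (Q : ℝ → Matrix (Fin n) (Fin k) ℂ)
    (hQ : ∀ x, MHasDerivAt Q ((1 - Q x * (Q x)ᴴ) * A x * Q x) x)
    (hQcont : Continuous fun x => (1 - Q x * (Q x)ᴴ) * A x * Q x)
    (x₀ : ℝ) (hQ0 : (Q x₀)ᴴ * Q x₀ = 1) :
    ∀ x : ℝ, (Q x)ᴴ * Q x = 1 := by
  intro x
  set a : ℝ := min x x₀ - 1 with ha
  set b : ℝ := max x x₀ + 1 with hb
  have hab : a ≤ b := by
    have := min_le_max (a := x) (b := x₀); simp only [ha, hb]; linarith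
  set φ : ℝ → ℝ := fun t => max a (min b t) with hφ
  have hφmem : ∀ t, φ t ∈ Set.Icc a b := fun t => ⟨le_max_left _ _,
    max_le hab (min_le_left _ _)⟩
  have hφeq : ∀ t ∈ Set.Icc a b, φ t = t := fun t ht => by
    simp only [hφ]; rw [min_eq_right ht.2, max_eq_right ht.1]
  have hφc : Continuous φ := continuous_const.max (continuous_const.min continuous_id)
  -- continuity of Q
  have hQc : Continuous Q := continuous_matrix fun i j =>
    continuous_iff_continuousAt.2 fun t => (hQ t i j).continuousAt
  set B : ℝ → Matrix (Fin k) (Fin k) ℂ := fun t => (Q t)ᴴ * (A t)ᴴ * Q t with hBdef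
  set C : ℝ → Matrix (Fin k) (Fin k) ℂ := fun t => (Q t)ᴴ * A t * Q t with hCdef
  have hBc : Continuous B :=
    (hQc.matrix_conjTranspose.matrix_mul hA.matrix_conjTranspose).matrix_mul hQc
  have hCc : Continuous C := (hQc.matrix_conjTranspose.matrix_mul hA).matrix_mul hQc
  -- bounds on the compact interval
  obtain ⟨R₁, hR₁⟩ := isCompact_Icc.exists_bound_of_continuousOn (s := Set.Icc a b) hBc.continuousOn
  obtain ⟨R₂, hR₂⟩ := isCompact_Icc.exists_bound_of_continuousOn (s := Set.Icc a b) hCc.continuousOn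
  set K : NNReal := Real.toNNReal (R₁ + R₂) with hK
  set v : ℝ → Matrix (Fin k) (Fin k) ℂ → Matrix (Fin k) (Fin k) ℂ :=
    fun t M => -(B (φ t) * M) - M * C (φ t) with hv
  have hlip : ∀ t, LipschitzWith K (v t) := by
    intro t
    apply LipschitzWith.of_dist_le_mul
    intro M N
    rw [dist_eq_norm, dist_eq_norm]
    have e : v t M - v t N = -(B (φ t) * (M - N)) - (M - N) * C (φ t) := by
      simp only [hv, Matrix.mul_sub, Matrix.sub_mul]; abel
    rw [e]
    have h1 : ‖-(B (φ t) * (M - N)) - (M - N) * C (φ t)‖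
        ≤ ‖B (φ t) * (M - N)‖ + ‖(M - N) * C (φ t)‖ := by
      simpa using norm_sub_le (-(B (φ t) * (M - N))) ((M - N) * C (φ t))
    refine h1.trans ?_
    have h2 := Matrix.linfty_opNorm_mul (B (φ t)) (M - N)
    have h3 := Matrix.linfty_opNorm_mul (M - N) (C (φ t))
    have hB' := hR₁ _ (hφmem t)
    have hC' := hR₂ _ (hφmem t)
    have hnn : (0:ℝ) ≤ ‖M - N‖ := norm_nonneg _
    have hKge : R₁ + R₂ ≤ (K : ℝ) := Real.le_coe_toNNReal _
    nlinarith [norm_nonneg (B (φ t)), norm_nonneg (C (φ t))]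
  set G : ℝ → Matrix (Fin k) (Fin k) ℂ := fun t => (Q t)ᴴ * Q t - 1 with hGdef
  have hGc : Continuous G := (hQc.matrix_conjTranspose.matrix_mul hQc).sub continuous_const
  have hG' : ∀ t ∈ Set.Ioo a b, HasDerivAt G (v t (G t)) t := by
    intro t ht
    have hd := (gram_hasDerivAt (hQ t)).sub_const 1
    have heq2 : ((1 - Q t * (Q t)ᴴ) * A t * Q t)ᴴ * Q t
        + (Q t)ᴴ * ((1 - Q t * (Q t)ᴴ) * A t * Q t) = v t (G t) := by
      rw [oja_identity (Q t) (A t)]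
      simp only [hv, hGdef, hBdef, hCdef, hφeq t (Set.Ioo_subset_Icc_self ht)]
    rw [← heq2]
    exact hd
  have hzero' : ∀ t ∈ Set.Ioo a b,
      HasDerivAt (fun _ : ℝ => (0 : Matrix (Fin k) (Fin k) ℂ)) (v t 0) t := by
    intro t ht
    have : v t 0 = 0 := by simp [hv]
    rw [this]
    exact hasDerivAt_const _ _
  have hx₀ : x₀ ∈ Set.Ioo a b := by
    constructor
    · have : min x x₀ ≤ x₀ := min_le_right _ _
      simp only [ha]; linarith
    · have : x₀ ≤ max x x₀ := le_max_right _ _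
      simp only [hb]; linarith
  have heqG : G x₀ = 0 := by simp [hGdef, hQ0]
  have hEq := ODE_solution_unique_of_mem_Icc
    (v := v) (s := fun _ => Set.univ) (K := K)
    (fun t _ => (hlip t).lipschitzOnWith) hx₀ hGc.continuousOn hG'
    (fun _ _ => Set.mem_univ _) continuousOn_const hzero'
    (fun _ _ => Set.mem_univ _) heqG
  have hxmem : x ∈ Set.Icc a b := by
    constructor
    · have : min x x₀ ≤ x := min_le_left _ _
      simp only [ha]; linarith
    · have : x ≤ max x x₀ := le_max_left _ _
      simp only [hb]; linarith
  have := hEq hxmem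
  have hGx : G x = 0 := this
  exact sub_eq_zero.mp hGx

end helpers
end

section
/- Let n, k be positive integers with k ≤ n and let 𝔦, 𝔦' ⊂ {1,…,n} be index sets of cardinality k. Let Y ∈ ℂ^{n×k} have rank k with both Y_𝔦 and Y_{𝔦'} invertible, and let y := Y·(Y_𝔦)^{−1} be its representative with identity 𝔦-th submatrix. Then the 𝔦'-th k×k submatrix u := y_{𝔦'} of y is invertible, and the representative of the same k-plane with identity 𝔦'-th submatrix is y·u^{−1}, i.e. Y·(Y_{𝔦'})^{−1} = (Y·(Y_𝔦)^{−1})·((Y·(Y_𝔦)^{−1})_{𝔦'})^{−1}. Moreover, the chart-transition map sending the 𝔦°-rows of y to the (𝔦')°-rows of y·u^{−1} is holomorphic (complex differentiable) at every point ŷ ∈ ℂ^{(n−k)×k} for which the corresponding submatrix u is invertible. -/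
open Matrix

attribute [local instance] Matrix.normedAddCommGroup Matrix.normedSpace

/-- The `n × k` matrix whose `𝔦`-rows are `top` and whose `𝔦°`-rows are `bot`. -/
noncomputable def assemble {n k m : ℕ} (𝔦 : Finset (Fin n)) (h : 𝔦.card = k)
    (hc : 𝔦ᶜ.card = m) (top : Matrix (Fin k) (Fin k) ℂ) (bot : Matrix (Fin m) (Fin k) ℂ) :
    Matrix (Fin n) (Fin k) ℂ :=
  fun i j =>
    if hi : i ∈ 𝔦 then top ((𝔦.orderIsoOfFin h).symm ⟨i, hi⟩) j
    else bot ((𝔦ᶜ.orderIsoOfFin hc).symm ⟨i, Finset.mem_compl.mpr hi⟩) j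

section Aux

variable {E : Type*} [NormedAddCommGroup E] [NormedSpace ℂ E]

lemma diffAt_entry_proj {m p : ℕ} (i : Fin m) (j : Fin p) (x : Matrix (Fin m) (Fin p) ℂ) :
    DifferentiableAt ℂ (fun M : Matrix (Fin m) (Fin p) ℂ => M i j) x :=
  (((ContinuousLinearMap.proj (R := ℂ) (φ := fun _ : Fin p => ℂ) j).comp
    (ContinuousLinearMap.proj (R := ℂ) (φ := fun _ : Fin m => Fin p → ℂ) i))).differentiableAt

lemma diffAt_matrix {m p : ℕ} {f : E → Matrix (Fin m) (Fin p) ℂ} {x : E}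
    (h : ∀ i j, DifferentiableAt ℂ (fun e => f e i j) x) :
    DifferentiableAt ℂ f x := by
  exact differentiableAt_pi.mpr fun i => differentiableAt_pi.mpr (h i)

lemma diffAt_prod {ι : Type*} (s : Finset ι) (g : ι → E → ℂ) {x : E}
    (h : ∀ i ∈ s, DifferentiableAt ℂ (g i) x) :
    DifferentiableAt ℂ (fun e => ∏ i ∈ s, g i e) x := by
  classical
  induction s using Finset.induction_on with
  | empty => simpa using differentiableAt_const 1
  | @insert a s hi ih =>
    simp only [Finset.prod_insert hi]
    exact (h _ (Finset.mem_insert_self _ _)).mul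
      (ih fun i hi' => h i (Finset.mem_insert_of_mem hi'))

lemma diffAt_det {p : ℕ} {f : E → Matrix (Fin p) (Fin p) ℂ} {x : E}
    (h : ∀ i j, DifferentiableAt ℂ (fun e => f e i j) x) :
    DifferentiableAt ℂ (fun e => (f e).det) x := by
  simp only [Matrix.det_apply']
  exact DifferentiableAt.fun_sum fun σ _ =>
    ((diffAt_prod Finset.univ (fun i e => f e (σ i) i) fun i _ => h (σ i) i).const_mul _)

lemma diffAt_inv_entry {p : ℕ} {f : E → Matrix (Fin p) (Fin p) ℂ} {x : E}
    (h : ∀ i j, DifferentiableAt ℂ (fun e => f e i j) x) (hu : IsUnit (f x)) (i j : Fin p) :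
    DifferentiableAt ℂ (fun e => (f e)⁻¹ i j) x := by
  have hdet : (f x).det ≠ 0 := by
    rw [Matrix.isUnit_iff_isUnit_det] at hu
    exact hu.ne_zero
  simp only [Matrix.inv_def, Matrix.smul_apply, smul_eq_mul, Matrix.adjugate_apply,
    Ring.inverse_eq_inv']
  refine DifferentiableAt.mul ((diffAt_det h).inv hdet) (diffAt_det ?_)
  intro a b
  simp only [Matrix.updateRow_apply]
  by_cases hab : a = j
  · simp [hab]
  · simp only [hab, if_false]
    exact h a b

lemma submatrix_mul_left {m p q r : ℕ} (M : Matrix (Fin m) (Fin p) ℂ)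
    (N : Matrix (Fin p) (Fin q) ℂ) (e : Fin r → Fin m) :
    (M * N).submatrix e id = M.submatrix e id * N := by
  ext i j
  simp [Matrix.mul_apply]

end Aux

/-- Chart transitions on the Grassmann manifold: if both `Y_𝔦` and `Y_𝔦'` are
invertible and `y := Y·(Y_𝔦)⁻¹` is the representative with identity `𝔦`-submatrix,
then `u := y_𝔦'` is invertible, `Y·(Y_𝔦')⁻¹ = y·u⁻¹`, and the induced transition map
between the charts (sending the `𝔦°`-rows of `y` to the `𝔦'°`-rows of `y·u⁻¹`) is
holomorphic wherever the relevant submatrix is invertible. -/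
theorem grassmann_chart_transition_holomorphic
    (n k : ℕ) (hn : 0 < n) (hk : 0 < k) (hkn : k ≤ n)
    (𝔦 𝔦' : Finset (Fin n)) (h𝔦 : 𝔦.card = k) (h𝔦' : 𝔦'.card = k)
    (h𝔦c : 𝔦ᶜ.card = n - k) (h𝔦'c : 𝔦'ᶜ.card = n - k)
    (Y : Matrix (Fin n) (Fin k) ℂ) (hrank : Y.rank = k)
    (hY𝔦 : IsUnit (Y.submatrix (emb 𝔦 h𝔦) id))
    (hY𝔦' : IsUnit (Y.submatrix (emb 𝔦' h𝔦') id)) :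
    IsUnit ((Y * (Y.submatrix (emb 𝔦 h𝔦) id)⁻¹).submatrix (emb 𝔦' h𝔦') id) ∧
    Y * (Y.submatrix (emb 𝔦' h𝔦') id)⁻¹
      = (Y * (Y.submatrix (emb 𝔦 h𝔦) id)⁻¹)
        * ((Y * (Y.submatrix (emb 𝔦 h𝔦) id)⁻¹).submatrix (emb 𝔦' h𝔦') id)⁻¹ ∧
    (∀ yh₀ : Matrix (Fin (n - k)) (Fin k) ℂ,
      IsUnit ((assemble 𝔦 h𝔦 h𝔦c 1 yh₀).submatrix (emb 𝔦' h𝔦') id) →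
      DifferentiableAt ℂ
        (fun yh : Matrix (Fin (n - k)) (Fin k) ℂ =>
          ((assemble 𝔦 h𝔦 h𝔦c 1 yh
              * ((assemble 𝔦 h𝔦 h𝔦c 1 yh).submatrix (emb 𝔦' h𝔦') id)⁻¹).submatrix
            (emb 𝔦'ᶜ h𝔦'c) id))
        yh₀) := by

  set A := Y.submatrix (emb 𝔦 h𝔦) id with hA
  set B := Y.submatrix (emb 𝔦' h𝔦') id with hB
  have hsub : (Y * A⁻¹).submatrix (emb 𝔦' h𝔦') id = B * A⁻¹ := submatrix_mul_left _ _ _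
  have hAinv : IsUnit A⁻¹ := by
    rw [Matrix.isUnit_nonsing_inv_iff]
    exact hY𝔦
  have h1 : IsUnit ((Y * A⁻¹).submatrix (emb 𝔦' h𝔦') id) := by
    rw [hsub]; exact hY𝔦'.mul hAinv
  refine ⟨h1, ?_, ?_⟩
  · have hdetA : IsUnit A.det := (Matrix.isUnit_iff_isUnit_det A).mp hY𝔦
    rw [hsub, Matrix.mul_inv_rev, Matrix.nonsing_inv_nonsing_inv _ hdetA, ← Matrix.mul_assoc,
      Matrix.mul_assoc Y, Matrix.nonsing_inv_mul _ hdetA, Matrix.mul_one]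
  · intro yh₀ hu
    have hasm : ∀ (p : Fin n) (q : Fin k) (x : Matrix (Fin (n - k)) (Fin k) ℂ),
        DifferentiableAt ℂ (fun yh => assemble 𝔦 h𝔦 h𝔦c 1 yh p q) x := by
      intro p q x
      unfold assemble
      by_cases hp : p ∈ 𝔦
      · simp only [hp, dif_pos]
        exact differentiableAt_const _
      · simp only [hp, dif_neg, not_false_iff]
        exact diffAt_entry_proj _ _ _
    have husub : ∀ (i j : Fin k) (x : Matrix (Fin (n - k)) (Fin k) ℂ),
        DifferentiableAt ℂ
          (fun yh => ((assemble 𝔦 h𝔦 h𝔦c 1 yh).submatrix (emb 𝔦' h𝔦') id) i j) x := by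
      intro i j x
      simpa using hasm (emb 𝔦' h𝔦' i) j x
    apply diffAt_matrix
    intro i j
    simp only [Matrix.submatrix_apply, Matrix.mul_apply, id]
    apply DifferentiableAt.fun_sum
    intro l _
    exact (hasm _ _ _).mul (diffAt_inv_entry (fun a b => husub a b yh₀) hu l j)
end
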